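/- Let $M$ be the manifold $\mathbb{R}^n \times \mathbb{R}^k \times \mathbb{R} \times \mathbb{R}^{nk} \times \mathbb{R}^n$ with coordinates $(x^\mu, y^i, p, p^\mu_i, s^\mu)$, and let $\Theta = ds^\mu \wedge d^{n-1}x_\mu - p\,d^n x - p^\mu_i\,dy^i\wedge d^{n-1}x_\mu$, where $d^n x = dx^1\wedge\cdots\wedge dx^n$ and $d^{n-1}x_\mu = \iota_{\partial/\partial x^\mu} d^n x$. Then $\ker_1 d\Theta = \mathrm{span}\{\partial/\partial s^\mu : \mu = 1,\dots,n\}$, where $\ker_1 d\Theta$ is the set of vector fields $X$ with $\iota_X d\Theta = 0$, and in particular $\ker_1\Theta \cap \ker_1 d\Theta = \{0\}$ and $\ker_1 d\Theta \neq \{0\}$ (so $\Theta$ is a multicontact form). -/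

import Mathlib

/-!
STATEMENT 15 (Section 6): the canonical multicontact structure on the extended
phase space of action-dependent field theories, verified pointwise on the
tangent space `V = ℝⁿ × ℝᵏ × ℝ × ℝ^{nk} × ℝⁿ` (with `n = m + 1 ≥ 1`),
coordinates `(x^μ, y^i, p, p^μ_i, s^μ)`.

At a point with coordinate values `p₀`, `P₀`, the `n`-form
`Θ = ds^μ ∧ d^{n-1}x_μ - p dⁿx - p^μ_i dy^i ∧ d^{n-1}x_μ` and the
`(n+1)`-form `dΘ = -dp ∧ dⁿx - dp^μ_i ∧ dy^i ∧ d^{n-1}x_μ` are encoded by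
their evaluation on tuples of tangent vectors, expanding the wedge products by
determinants (`dⁿx = det` of the `x`-components, `d^{n-1}x_μ = ι_{∂/∂x^μ}dⁿx`).

The claims: `ker₁ dΘ = span{∂/∂s^μ}`, `ker₁ Θ ∩ ker₁ dΘ = {0}` and
`ker₁ dΘ ≠ {0}`, where `ι_u ω = 0` is expressed as the vanishing of `ω` on all
tuples having `u` in the first slot.
-/

/-- The tangent space `V = ℝⁿ × ℝᵏ × ℝ × ℝ^{n·k} × ℝⁿ`, with components
`(x, y, p, P, s)`. -/
abbrev PhSp (m k : ℕ) : Type :=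
  (Fin (m + 1) → ℝ) × (Fin k → ℝ) × ℝ × (Fin (m + 1) → Fin k → ℝ) × (Fin (m + 1) → ℝ)

/-- `dⁿx` evaluated on `n = m+1` tangent vectors: the determinant of the matrix
of their `x`-components (columns). -/
noncomputable def detX {m k : ℕ} (w : Fin (m + 1) → PhSp m k) : ℝ :=
  Matrix.det (Matrix.of fun r j => (w j).1 r)

/-- Evaluation of `Θ = ds^μ ∧ d^{n-1}x_μ - p dⁿx - p^μ_i dy^i ∧ d^{n-1}x_μ`
at a point with coordinate values `p₀`, `P₀`, on `n = m+1` tangent vectors: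
`∑ μ (ds^μ - P₀^μ_i dy^i) ∧ d^{n-1}x_μ` contributes, for each slot `i`, the
determinant of the `x`-column matrix with column `i` replaced by the vector
`(s(wᵢ)^μ - ∑_l P₀^μ_l y(wᵢ)^l)_μ`. -/
noncomputable def ThetaEval {m k : ℕ} (p₀ : ℝ) (P₀ : Fin (m + 1) → Fin k → ℝ)
    (w : Fin (m + 1) → PhSp m k) : ℝ :=
  (∑ i : Fin (m + 1), Matrix.det (Matrix.of fun r j =>
      if j = i then (w i).2.2.2.2 r - ∑ l : Fin k, P₀ r l * (w i).2.1 l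
      else (w j).1 r))
    - p₀ * detX w

/-- The `ℝⁿ`-valued pairing `(dp^μ_i ∧ dy^i)(u, u')` (index `μ`). -/
noncomputable def omega2 {m k : ℕ} (u u' : PhSp m k) : Fin (m + 1) → ℝ :=
  fun μ => ∑ l : Fin k, (u.2.2.2.1 μ l * u'.2.1 l - u'.2.2.2.1 μ l * u.2.1 l)

/-- Evaluation of `dΘ = -dp ∧ dⁿx - dp^μ_i ∧ dy^i ∧ d^{n-1}x_μ` on `n+1 = m+2`
tangent vectors, expanding the wedge products by the shuffle formula. -/
noncomputable def dThetaEval {m k : ℕ} (w : Fin (m + 2) → PhSp m k) : ℝ :=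
  -(∑ a : Fin (m + 2), (-1 : ℝ) ^ (a : ℕ) * (w a).2.2.1 *
      detX (fun j => w (a.succAbove j)))
  - ∑ a : Fin (m + 2), ∑ b : Fin (m + 1),
      (if (a : ℕ) ≤ (b : ℕ) then
        (-1 : ℝ) ^ ((a : ℕ) + (b : ℕ)) * Matrix.det (Matrix.of fun r (j : Fin (m + 1)) =>
          Fin.cases (omega2 (w a) (w (a.succAbove b)) r)
            (fun j' => (w (a.succAbove (b.succAbove j'))).1 r) j)
      else 0)

/-- basis vector in the `x`-direction -/
def eX {m k : ℕ} (μ : Fin (m+1)) : PhSp m k :=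
  (fun r => if r = μ then 1 else 0, 0, 0, 0, 0)

def eP' {m k : ℕ} : PhSp m k := (0, 0, 1, 0, 0)

def eY {m k : ℕ} (i : Fin k) : PhSp m k :=
  (0, fun l => if l = i then 1 else 0, 0, 0, 0)

def ePP {m k : ℕ} (μ : Fin (m+1)) (i : Fin k) : PhSp m k :=
  (0, 0, 0, fun r l => if r = μ ∧ l = i then 1 else 0, 0)

lemma omega2_eY {m k : ℕ} (u : PhSp m k) (ν : Fin (m+1)) (i : Fin k) :
    omega2 u (eY i) ν = u.2.2.2.1 ν i := by
  simp [omega2, eY, mul_ite]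

lemma omega2_ePP {m k : ℕ} (u : PhSp m k) (μ : Fin (m+1)) (i : Fin k) :
    omega2 u (ePP μ i) μ = -u.2.1 i := by
  simp [omega2, ePP, ite_mul]

lemma det_col0 {m : ℕ} (μ : Fin (m+1)) (c : Fin (m+1) → ℝ)
    (M : Matrix (Fin (m+1)) (Fin (m+1)) ℝ)
    (h0 : ∀ r, M r 0 = c r)
    (hj : ∀ r (j : Fin m), M r j.succ = if r = μ.succAbove j then 1 else 0) :
    M.det = (-1)^(μ:ℕ) * c μ := by
  rw [Matrix.det_succ_column_zero]
  rw [Finset.sum_eq_single μ]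
  · have h1 : (M.submatrix μ.succAbove Fin.succ) = 1 := by
      ext r j
      rw [Matrix.submatrix_apply, hj, Matrix.one_apply]
      simp [Fin.succAbove_right_inj]
    rw [h0, h1, Matrix.det_one, mul_one]
  · intro i _ hi
    obtain ⟨j₀, hj₀⟩ := Fin.exists_succAbove_eq hi
    have h2 : (M.submatrix i.succAbove Fin.succ).det = 0 := by
      apply Matrix.det_eq_zero_of_column_eq_zero j₀
      intro r
      rw [Matrix.submatrix_apply, hj, hj₀, if_neg (Fin.succAbove_ne i r)]
    rw [h2, mul_zero]
  · intro h; exact absurd (Finset.mem_univ μ) h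

lemma succAbove_of_le {n : ℕ} (a : Fin (n+2)) (b : Fin (n+1)) (hab : (a:ℕ) ≤ (b:ℕ)) :
    a.succAbove b = b.succ :=
  Fin.succAbove_of_le_castSucc _ _ (by rwa [Fin.le_def, Fin.coe_castSucc])

section Extraction

variable {m k : ℕ} (u : PhSp m k)

/-- vanishing of a shuffle-sum determinant when the second `omega2` argument
has trivial `y` and `P` components. -/
lemma S2_vanish (W : Fin (m+2) → PhSp m k)
    (hW : ∀ b : Fin (m+1), b ≠ 0 → (W b.succ).2.1 = 0 ∧ (W b.succ).2.2.2.1 = 0)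
    (a : Fin (m+2)) (b : Fin (m+1)) (hab : (a:ℕ) ≤ (b:ℕ)) (hb : ¬(a = 0 ∧ b = 0)) :
    Matrix.det (Matrix.of fun r (j : Fin (m+1)) =>
      (Fin.cases (omega2 (W a) (W (a.succAbove b)) r)
        (fun j' => (W (a.succAbove (b.succAbove j'))).1 r) j : ℝ)) = 0 := by
  have hb0 : b ≠ 0 := by
    rcases eq_or_ne a 0 with rfl | ha
    · intro h; exact hb ⟨rfl, h⟩
    · intro h
      subst h
      have : 1 ≤ (a:ℕ) := Nat.one_le_iff_ne_zero.mpr (fun h0 => ha (Fin.ext h0))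
      simp at hab
      omega
  have h1 : a.succAbove b = b.succ := succAbove_of_le a b hab
  apply Matrix.det_eq_zero_of_column_eq_zero 0
  intro r
  simp only [Matrix.of_apply, Fin.cases_zero, h1]
  simp [omega2, (hW b hb0).1, (hW b hb0).2]

lemma dTheta_master (v₀ : PhSp m k) (hx0 : v₀.1 = 0) (hp0 : v₀.2.2.1 = 0) (μ : Fin (m+1)) :
    dThetaEval (Fin.cons u (Fin.cons v₀ (fun j => (eX (μ.succAbove j) : PhSp m k)))) =
      -((-1:ℝ)^(μ:ℕ) * omega2 u v₀ μ) := by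
  set w : Fin (m+1) → PhSp m k := Fin.cons v₀ (fun j => eX (μ.succAbove j)) with hw
  set w' : Fin (m+2) → PhSp m k := Fin.cons u w with hw'
  have hS1 : (∑ a : Fin (m + 2), (-1 : ℝ) ^ (a : ℕ) * (w' a).2.2.1 *
      detX (fun j => w' (a.succAbove j))) = 0 := by
    apply Finset.sum_eq_zero
    intro a _
    induction a using Fin.cases with
    | zero =>
      have hz : detX (fun j => w' ((0:Fin (m+2)).succAbove j)) = 0 := by
        unfold detX
        apply Matrix.det_eq_zero_of_column_eq_zero 0
        intro r
        simp [Matrix.of_apply, Fin.zero_succAbove, hw', hw, hx0]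
      rw [hz, mul_zero]
    | succ a' =>
      have : (w' a'.succ).2.2.1 = 0 := by
        induction a' using Fin.cases with
        | zero => simp [hw', hw, hp0]
        | succ a'' => simp [hw', hw, eX]
      rw [this, mul_zero, zero_mul]
  have hS2 : (∑ a : Fin (m + 2), ∑ b : Fin (m + 1),
      (if (a : ℕ) ≤ (b : ℕ) then
        (-1 : ℝ) ^ ((a : ℕ) + (b : ℕ)) * Matrix.det (Matrix.of fun r (j : Fin (m + 1)) =>
          Fin.cases (omega2 (w' a) (w' (a.succAbove b)) r)
            (fun j' => (w' (a.succAbove (b.succAbove j'))).1 r) j)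
      else 0)) = (-1:ℝ)^(μ:ℕ) * omega2 u v₀ μ := by
    have hwtriv : ∀ b : Fin (m+1), b ≠ 0 → (w' b.succ).2.1 = 0 ∧ (w' b.succ).2.2.2.1 = 0 := by
      intro b hb
      obtain ⟨b', rfl⟩ := Fin.eq_succ_of_ne_zero hb
      constructor <;> simp [hw', hw, eX]
    rw [Finset.sum_eq_single 0]
    · rw [Finset.sum_eq_single 0]
      · rw [if_pos (by simp)]
        have hdet : Matrix.det (Matrix.of fun r (j : Fin (m + 1)) =>
            (Fin.cases (omega2 (w' 0) (w' ((0:Fin (m+2)).succAbove 0)) r)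
              (fun j' => (w' ((0:Fin (m+2)).succAbove ((0:Fin (m+1)).succAbove j'))).1 r) j : ℝ)) =
            (-1:ℝ)^(μ:ℕ) * omega2 u v₀ μ := by
          apply det_col0 μ (omega2 u v₀)
          · intro r
            simp only [Matrix.of_apply, Fin.cases_zero]
            have e1 : (0:Fin (m+2)).succAbove 0 = 1 := rfl
            rw [e1]
            have : w' 1 = v₀ := by
              show w' (0:Fin (m+1)).succ = v₀
              rw [hw', Fin.cons_succ, hw, Fin.cons_zero]
            rw [hw', Fin.cons_zero] at *
            rw [this]
          · intro r j'
            simp only [Matrix.of_apply, Fin.cases_succ]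
            rw [Fin.zero_succAbove, Fin.zero_succAbove, hw', Fin.cons_succ, hw, Fin.cons_succ]
            rfl
        rw [hdet]
        simp
      · intro b _ hb
        rw [if_pos (by simp)]
        rw [S2_vanish w' hwtriv 0 b (by simp) (by tauto), mul_zero]
      · intro h; exact absurd (Finset.mem_univ _) h
    · intro a _ ha
      apply Finset.sum_eq_zero
      intro b _
      rcases le_or_gt (a:ℕ) (b:ℕ) with hab | hab
      · rw [if_pos hab, S2_vanish w' hwtriv a b hab (by tauto), mul_zero]
      · rw [if_neg (not_le.mpr hab)]
    · intro h; exact absurd (Finset.mem_univ _) h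
  show -(∑ a : Fin (m + 2), (-1 : ℝ) ^ (a : ℕ) * (w' a).2.2.1 *
      detX (fun j => w' (a.succAbove j)))
    - (∑ a : Fin (m + 2), ∑ b : Fin (m + 1),
      (if (a : ℕ) ≤ (b : ℕ) then
        (-1 : ℝ) ^ ((a : ℕ) + (b : ℕ)) * Matrix.det (Matrix.of fun r (j : Fin (m + 1)) =>
          Fin.cases (omega2 (w' a) (w' (a.succAbove b)) r)
            (fun j' => (w' (a.succAbove (b.succAbove j'))).1 r) j)
      else 0)) = -((-1:ℝ)^(μ:ℕ) * omega2 u v₀ μ)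
  rw [hS1, hS2]
  ring
end Extraction


section Extraction2

variable {m k : ℕ} (u : PhSp m k)

lemma dTheta_x (μ : Fin (m+1)) :
    dThetaEval (Fin.cons u (Fin.cons (eP' : PhSp m k) (fun j => eX (μ.succAbove j)))) =
      (-1:ℝ)^(μ:ℕ) * u.1 μ := by
  set w : Fin (m+1) → PhSp m k := Fin.cons eP' (fun j => eX (μ.succAbove j)) with hw
  set w' : Fin (m+2) → PhSp m k := Fin.cons u w with hw'
  have hwtriv : ∀ b : Fin (m+1), (w' b.succ).2.1 = 0 ∧ (w' b.succ).2.2.2.1 = 0 := by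
    intro b
    induction b using Fin.cases with
    | zero => constructor <;> simp [hw', hw, eP']
    | succ b' => constructor <;> simp [hw', hw, eX]
  have hS1 : (∑ a : Fin (m + 2), (-1 : ℝ) ^ (a : ℕ) * (w' a).2.2.1 *
      detX (fun j => w' (a.succAbove j))) = -((-1:ℝ)^(μ:ℕ) * u.1 μ) := by
    rw [Finset.sum_eq_single 1]
    · have hp1 : (w' 1).2.2.1 = 1 := by
        show (w' (0:Fin (m+1)).succ).2.2.1 = 1
        rw [hw', Fin.cons_succ, hw, Fin.cons_zero]
        rfl
      have h10 : (1 : Fin (m+2)).succAbove 0 = 0 := by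
        rw [Fin.succAbove_of_castSucc_lt]
        · simp
        · simp [Fin.lt_def]
      have hdet : detX (fun j => w' ((1:Fin (m+2)).succAbove j)) = (-1:ℝ)^(μ:ℕ) * u.1 μ := by
        unfold detX
        apply det_col0 μ u.1
        · intro r
          simp only [Matrix.of_apply, h10, hw', Fin.cons_zero]
        · intro r j'
          have : (1 : Fin (m+2)).succAbove j'.succ = j'.succ.succ :=
            succAbove_of_le 1 j'.succ (by simp)
          simp only [Matrix.of_apply, this, hw', Fin.cons_succ, hw]
          rfl
      rw [hp1, hdet]
      simp [pow_succ]
    · intro a _ ha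
      induction a using Fin.cases with
      | zero =>
        have hz : detX (fun j => w' ((0:Fin (m+2)).succAbove j)) = 0 := by
          unfold detX
          apply Matrix.det_eq_zero_of_column_eq_zero 0
          intro r
          simp [Matrix.of_apply, Fin.zero_succAbove, hw', hw, eP']
        rw [hz, mul_zero]
      | succ a' =>
        have ha' : a' ≠ 0 := by
          intro h; subst h; exact ha rfl
        obtain ⟨a'', rfl⟩ := Fin.eq_succ_of_ne_zero ha'
        have : (w' a''.succ.succ).2.2.1 = 0 := by simp [hw', hw, eX]
        rw [this, mul_zero, zero_mul]
    · intro h; exact absurd (Finset.mem_univ _) h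
  have hS2 : (∑ a : Fin (m + 2), ∑ b : Fin (m + 1),
      (if (a : ℕ) ≤ (b : ℕ) then
        (-1 : ℝ) ^ ((a : ℕ) + (b : ℕ)) * Matrix.det (Matrix.of fun r (j : Fin (m + 1)) =>
          Fin.cases (omega2 (w' a) (w' (a.succAbove b)) r)
            (fun j' => (w' (a.succAbove (b.succAbove j'))).1 r) j)
      else 0)) = 0 := by
    apply Finset.sum_eq_zero
    intro a _
    apply Finset.sum_eq_zero
    intro b _
    rcases le_or_gt (a:ℕ) (b:ℕ) with hab | hab
    · have h1 : a.succAbove b = b.succ := succAbove_of_le a b hab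
      have hz : Matrix.det (Matrix.of fun r (j : Fin (m+1)) =>
          (Fin.cases (omega2 (w' a) (w' (a.succAbove b)) r)
            (fun j' => (w' (a.succAbove (b.succAbove j'))).1 r) j : ℝ)) = 0 := by
        apply Matrix.det_eq_zero_of_column_eq_zero 0
        intro r
        simp only [Matrix.of_apply, Fin.cases_zero, h1]
        simp [omega2, (hwtriv b).1, (hwtriv b).2]
      rw [if_pos hab, hz, mul_zero]
    · rw [if_neg (not_le.mpr hab)]
  show -(∑ a : Fin (m + 2), (-1 : ℝ) ^ (a : ℕ) * (w' a).2.2.1 *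
      detX (fun j => w' (a.succAbove j)))
    - (∑ a : Fin (m + 2), ∑ b : Fin (m + 1),
      (if (a : ℕ) ≤ (b : ℕ) then
        (-1 : ℝ) ^ ((a : ℕ) + (b : ℕ)) * Matrix.det (Matrix.of fun r (j : Fin (m + 1)) =>
          Fin.cases (omega2 (w' a) (w' (a.succAbove b)) r)
            (fun j' => (w' (a.succAbove (b.succAbove j'))).1 r) j)
      else 0)) = (-1:ℝ)^(μ:ℕ) * u.1 μ
  rw [hS1, hS2]
  ring

lemma dTheta_p :
    dThetaEval (Fin.cons u (fun j : Fin (m+1) => (eX j : PhSp m k))) = -u.2.2.1 := by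
  set w : Fin (m+1) → PhSp m k := fun j => eX j with hw
  set w' : Fin (m+2) → PhSp m k := Fin.cons u w with hw'
  have hwtriv : ∀ b : Fin (m+1), (w' b.succ).2.1 = 0 ∧ (w' b.succ).2.2.2.1 = 0 := by
    intro b
    constructor <;> simp [hw', hw, eX]
  have hS1 : (∑ a : Fin (m + 2), (-1 : ℝ) ^ (a : ℕ) * (w' a).2.2.1 *
      detX (fun j => w' (a.succAbove j))) = u.2.2.1 := by
    rw [Finset.sum_eq_single 0]
    · have hdet : detX (fun j => w' ((0:Fin (m+2)).succAbove j)) = 1 := by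
        unfold detX
        have := det_col0 (0 : Fin (m+1)) (fun r => if r = 0 then 1 else 0)
          (Matrix.of fun r j => (w' ((0:Fin (m+2)).succAbove j)).1 r)
          (by intro r
              simp only [Matrix.of_apply, Fin.zero_succAbove, hw', Fin.cons_succ, hw]
              rfl)
          (by intro r j'
              simp only [Matrix.of_apply, Fin.zero_succAbove, hw', Fin.cons_succ, hw]
              rfl)
        rw [this]
        simp
      rw [hdet, hw', Fin.cons_zero]
      simp
    · intro a _ ha
      obtain ⟨a', rfl⟩ := Fin.eq_succ_of_ne_zero ha
      have : (w' a'.succ).2.2.1 = 0 := by simp [hw', hw, eX]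
      rw [this, mul_zero, zero_mul]
    · intro h; exact absurd (Finset.mem_univ _) h
  have hS2 : (∑ a : Fin (m + 2), ∑ b : Fin (m + 1),
      (if (a : ℕ) ≤ (b : ℕ) then
        (-1 : ℝ) ^ ((a : ℕ) + (b : ℕ)) * Matrix.det (Matrix.of fun r (j : Fin (m + 1)) =>
          Fin.cases (omega2 (w' a) (w' (a.succAbove b)) r)
            (fun j' => (w' (a.succAbove (b.succAbove j'))).1 r) j)
      else 0)) = 0 := by
    apply Finset.sum_eq_zero
    intro a _
    apply Finset.sum_eq_zero
    intro b _
    rcases le_or_gt (a:ℕ) (b:ℕ) with hab | hab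
    · have h1 : a.succAbove b = b.succ := succAbove_of_le a b hab
      have hz : Matrix.det (Matrix.of fun r (j : Fin (m+1)) =>
          (Fin.cases (omega2 (w' a) (w' (a.succAbove b)) r)
            (fun j' => (w' (a.succAbove (b.succAbove j'))).1 r) j : ℝ)) = 0 := by
        apply Matrix.det_eq_zero_of_column_eq_zero 0
        intro r
        simp only [Matrix.of_apply, Fin.cases_zero, h1]
        simp [omega2, (hwtriv b).1, (hwtriv b).2]
      rw [if_pos hab, hz, mul_zero]
    · rw [if_neg (not_le.mpr hab)]
  show -(∑ a : Fin (m + 2), (-1 : ℝ) ^ (a : ℕ) * (w' a).2.2.1 *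
      detX (fun j => w' (a.succAbove j)))
    - (∑ a : Fin (m + 2), ∑ b : Fin (m + 1),
      (if (a : ℕ) ≤ (b : ℕ) then
        (-1 : ℝ) ^ ((a : ℕ) + (b : ℕ)) * Matrix.det (Matrix.of fun r (j : Fin (m + 1)) =>
          Fin.cases (omega2 (w' a) (w' (a.succAbove b)) r)
            (fun j' => (w' (a.succAbove (b.succAbove j'))).1 r) j)
      else 0)) = -u.2.2.1
  rw [hS1, hS2]
  ring

end Extraction2

lemma Theta_s {m k : ℕ} (p₀ : ℝ) (P₀ : Fin (m + 1) → Fin k → ℝ) (u : PhSp m k)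
    (hx : u.1 = 0) (hy : u.2.1 = 0) (μ : Fin (m+1)) :
    ThetaEval p₀ P₀ (Fin.cons u (fun j => (eX (μ.succAbove j) : PhSp m k))) =
      (-1:ℝ)^(μ:ℕ) * u.2.2.2.2 μ := by
  set w' : Fin (m+1) → PhSp m k := Fin.cons u (fun j => eX (μ.succAbove j)) with hw'
  have hdX : detX w' = 0 := by
    unfold detX
    apply Matrix.det_eq_zero_of_column_eq_zero 0
    intro r
    simp [Matrix.of_apply, hw', hx]
  have hsum : (∑ i : Fin (m + 1), Matrix.det (Matrix.of fun r j =>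
      if j = i then (w' i).2.2.2.2 r - ∑ l : Fin k, P₀ r l * (w' i).2.1 l
      else (w' j).1 r)) = (-1:ℝ)^(μ:ℕ) * u.2.2.2.2 μ := by
    rw [Finset.sum_eq_single 0]
    · apply det_col0 μ u.2.2.2.2
      · intro r
        simp only [Matrix.of_apply, if_pos rfl, hw', Fin.cons_zero, hy]
        simp
      · intro r j'
        simp only [Matrix.of_apply, if_neg (Fin.succ_ne_zero j'), hw', Fin.cons_succ]
        rfl
    · intro i _ hi
      apply Matrix.det_eq_zero_of_column_eq_zero 0
      intro r
      simp only [Matrix.of_apply, if_neg (Ne.symm hi), hw', Fin.cons_zero]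
      rw [hx]
      rfl
    · intro h; exact absurd (Finset.mem_univ _) h
  show (∑ i : Fin (m + 1), Matrix.det (Matrix.of fun r j =>
      if j = i then (w' i).2.2.2.2 r - ∑ l : Fin k, P₀ r l * (w' i).2.1 l
      else (w' j).1 r)) - p₀ * detX w' = (-1:ℝ)^(μ:ℕ) * u.2.2.2.2 μ
  rw [hsum, hdX]
  ring

lemma sA0 {n : ℕ} (a : Fin (n+2)) (ha : a ≠ 0) : a.succAbove 0 = 0 := by
  rw [Fin.succAbove_of_castSucc_lt]
  · simp
  · simpa [Fin.pos_iff_ne_zero] using ha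

lemma omega2_trivR {m k : ℕ} (v v' : PhSp m k) (hy : v'.2.1 = 0) (hP : v'.2.2.2.1 = 0) :
    omega2 v v' = 0 := by
  funext μ; simp [omega2, hy, hP]

lemma ker_dTheta {m k : ℕ} (u : PhSp m k) (hx : u.1 = 0) (hy : u.2.1 = 0)
    (hp : u.2.2.1 = 0) (hP : u.2.2.2.1 = 0) (w : Fin (m+1) → PhSp m k) :
    dThetaEval (Fin.cons u w) = 0 := by
  set w' : Fin (m+2) → PhSp m k := Fin.cons u w with hw'
  show -(∑ a : Fin (m + 2), (-1 : ℝ) ^ (a : ℕ) * (w' a).2.2.1 *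
      detX (fun j => w' (a.succAbove j)))
    - ∑ a : Fin (m + 2), ∑ b : Fin (m + 1),
      (if (a : ℕ) ≤ (b : ℕ) then
        (-1 : ℝ) ^ ((a : ℕ) + (b : ℕ)) * Matrix.det (Matrix.of fun r (j : Fin (m + 1)) =>
          Fin.cases (omega2 (w' a) (w' (a.succAbove b)) r)
            (fun j' => (w' (a.succAbove (b.succAbove j'))).1 r) j)
      else 0) = 0
  have hS1 : ∀ a : Fin (m+2), (-1:ℝ)^(a:ℕ) * (w' a).2.2.1 *
      detX (fun j => w' (a.succAbove j)) = 0 := by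
    intro a
    rcases eq_or_ne a 0 with rfl | ha
    · simp [hw', hp]
    · have h0 : a.succAbove 0 = 0 := sA0 a ha
      have hz : detX (fun j => w' (a.succAbove j)) = 0 := by
        unfold detX
        apply Matrix.det_eq_zero_of_column_eq_zero 0
        intro r
        simp [Matrix.of_apply, h0, hw', hx]
      rw [hz, mul_zero]
  have hS2 : ∀ (a : Fin (m+2)) (b : Fin (m+1)),
      (if (a:ℕ) ≤ (b:ℕ) then
        (-1:ℝ)^((a:ℕ)+(b:ℕ)) * Matrix.det (Matrix.of fun r (j : Fin (m+1)) =>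
          Fin.cases (omega2 (w' a) (w' (a.succAbove b)) r)
            (fun j' => (w' (a.succAbove (b.succAbove j'))).1 r) j)
      else 0) = 0 := by
    intro a b
    rcases le_or_gt (a:ℕ) (b:ℕ) with hab | hab
    · rw [if_pos hab]
      rcases eq_or_ne a 0 with rfl | ha
      · have hz : Matrix.det (Matrix.of fun r (j : Fin (m+1)) =>
            (Fin.cases (omega2 (w' 0) (w' ((0:Fin (m+2)).succAbove b)) r)
              (fun j' => (w' ((0:Fin (m+2)).succAbove (b.succAbove j'))).1 r) j : ℝ)) = 0 := by
          apply Matrix.det_eq_zero_of_column_eq_zero 0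
          intro r
          simp [Matrix.of_apply, hw', omega2, hy, hP]
        rw [hz, mul_zero]
      · have ha' : 1 ≤ (a:ℕ) := by
          rcases Nat.eq_zero_or_pos (a:ℕ) with h | h
          · exact absurd (Fin.ext h) ha
          · exact h
        have hm : 0 < m := by
          have := b.isLt; omega
        have hb : (0:ℕ) < (b:ℕ) := by omega
        set j₀ : Fin m := ⟨0, hm⟩ with hj₀
        have h1 : b.succAbove j₀ = 0 := by
          rw [Fin.succAbove_of_castSucc_lt]
          · exact Fin.ext (by simp [hj₀])
          · exact Fin.lt_def.mpr (by simpa [hj₀] using hb)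
        have h2 : a.succAbove (b.succAbove j₀) = 0 := by
          rw [h1]; exact sA0 a ha
        have hz : Matrix.det (Matrix.of fun r (j : Fin (m+1)) =>
            (Fin.cases (omega2 (w' a) (w' (a.succAbove b)) r)
              (fun j' => (w' (a.succAbove (b.succAbove j'))).1 r) j : ℝ)) = 0 := by
          apply Matrix.det_eq_zero_of_column_eq_zero j₀.succ
          intro r
          simp [Matrix.of_apply, h2, hw', hx]
        rw [hz, mul_zero]
    · rw [if_neg (not_le.mpr hab)]
  rw [Finset.sum_eq_zero (fun a _ => hS1 a),
    Finset.sum_eq_zero (fun a _ => Finset.sum_eq_zero (fun b _ => hS2 a b))]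
  ring


theorem stmt15 (m k : ℕ) (p₀ : ℝ) (P₀ : Fin (m + 1) → Fin k → ℝ) :
    -- `ker₁ dΘ = span{∂/∂s^μ}`
    (∀ u : PhSp m k,
      (∀ w : Fin (m + 1) → PhSp m k, dThetaEval (Fin.cons u w) = 0) ↔
        (u.1 = 0 ∧ u.2.1 = 0 ∧ u.2.2.1 = 0 ∧ u.2.2.2.1 = 0)) ∧
    -- `ker₁ Θ ∩ ker₁ dΘ = {0}`
    (∀ u : PhSp m k,
      (∀ w : Fin m → PhSp m k, ThetaEval p₀ P₀ (Fin.cons u w) = 0) →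
      (∀ w : Fin (m + 1) → PhSp m k, dThetaEval (Fin.cons u w) = 0) →
      u = 0) ∧
    -- `ker₁ dΘ ≠ {0}`
    (∃ u : PhSp m k, u ≠ 0 ∧
      ∀ w : Fin (m + 1) → PhSp m k, dThetaEval (Fin.cons u w) = 0) := by

  have hne : ∀ ν : Fin (m+1), ((-1:ℝ)^(ν:ℕ)) ≠ 0 := fun ν => pow_ne_zero _ (by norm_num)
  have key : ∀ u : PhSp m k,
      (∀ w : Fin (m + 1) → PhSp m k, dThetaEval (Fin.cons u w) = 0) ↔
        (u.1 = 0 ∧ u.2.1 = 0 ∧ u.2.2.1 = 0 ∧ u.2.2.2.1 = 0) := by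
    intro u
    constructor
    · intro h
      refine ⟨funext fun μ => ?_, funext fun i => ?_, ?_, funext fun μ => funext fun i => ?_⟩
      · have h1 := h (Fin.cons eP' (fun j => eX (μ.succAbove j)))
        rw [dTheta_x u μ] at h1
        simpa using (mul_eq_zero.mp h1).resolve_left (hne μ)
      · have h1 := h (Fin.cons (ePP 0 i) (fun j => eX ((0:Fin (m+1)).succAbove j)))
        rw [dTheta_master u (ePP 0 i) rfl rfl 0, omega2_ePP] at h1
        simpa using h1
      · have h1 := h (fun j => eX j)
        rw [dTheta_p u] at h1
        simpa using h1
      · have h1 := h (Fin.cons (eY i) (fun j => eX (μ.succAbove j)))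
        rw [dTheta_master u (eY i) rfl rfl μ, omega2_eY] at h1
        rw [neg_eq_zero] at h1
        simpa using (mul_eq_zero.mp h1).resolve_left (hne μ)
    · rintro ⟨hx, hy, hp, hP⟩ w
      exact ker_dTheta u hx hy hp hP w
  refine ⟨key, ?_, ?_⟩
  · intro u h1 h2
    obtain ⟨hx, hy, hp, hP⟩ := (key u).1 h2
    have hs : u.2.2.2.2 = 0 := by
      funext μ
      have h3 := h1 (fun j => eX (μ.succAbove j))
      rw [Theta_s p₀ P₀ u hx hy μ] at h3
      simpa using (mul_eq_zero.mp h3).resolve_left (hne μ)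
    have hu : u = (u.1, u.2.1, u.2.2.1, u.2.2.2.1, u.2.2.2.2) := rfl
    rw [hu, hx, hy, hp, hP, hs]
    rfl
  · refine ⟨(0, 0, 0, 0, fun _ => 1), ?_, fun w => ker_dTheta _ rfl rfl rfl rfl w⟩
    intro hc
    have h0 := congrArg (fun v : PhSp m k => v.2.2.2.2 0) hc
    norm_num at h0
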